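/- Let (V₀, E₀) and (V₁, E₁) be cographs with maps f₀ : V₀ → (2²)^d and f₁ : V₁ → (2²)^d each satisfying the up-1-comb/wide-right-1-comb encoding of edges/non-edges. Then the map f on the disjoint union V₀ ⊔ V₁ defined by f(v) = f₀(v)⌢(0,0) for v ∈ V₀ and f(v) = f₁(v)⌢(1,0) for v ∈ V₁ encodes the coproduct graph G₀ ⊕ G₁ into (2²)^{d+1}; and the map defined by f(v) = f₀(v)⌢(0,0) for v ∈ V₀ and f(v) = f₁(v)⌢(0,1) for v ∈ V₁ encodes the join G₀ ∇ G₁ into (2²)^{d+1}. -/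

import Mathlib

/-- The index square `2²`. -/
abbrev Sq : Type := Fin 2 × Fin 2

/-- `{σ, τ}` is an up-1-comb: at the end of the longest common prefix the two
sequences have the same first coordinate and different second coordinates. -/
def UpPair {d : ℕ} (σ τ : Fin d → Sq) : Prop :=
  ∃ t : Fin d, (∀ s, s < t → σ s = τ s) ∧ (σ t).1 = (τ t).1 ∧ (σ t).2 ≠ (τ t).2

/-- `{σ, τ}` is a wide right-1-comb: at the end of the longest common prefix the
two sequences have different first coordinates. -/
def WidePair {d : ℕ} (σ τ : Fin d → Sq) : Prop :=
  ∃ t : Fin d, (∀ s, s < t → σ s = τ s) ∧ (σ t).1 ≠ (τ t).1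

/-- Auxiliary relation for the disjoint union of two graphs. -/
def sumRel {V W : Type} (G : SimpleGraph V) (H : SimpleGraph W) : V ⊕ W → V ⊕ W → Prop
  | .inl v, .inl v' => G.Adj v v'
  | .inr w, .inr w' => H.Adj w w'
  | _, _ => False

/-- Disjoint union (coproduct) of two simple graphs. -/
def sumGraph {V W : Type} (G : SimpleGraph V) (H : SimpleGraph W) : SimpleGraph (V ⊕ W) :=
  SimpleGraph.fromRel (sumRel G H)

/-- Auxiliary relation for the join of two graphs. -/
def joinRel {V W : Type} (G : SimpleGraph V) (H : SimpleGraph W) : V ⊕ W → V ⊕ W → Prop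
  | .inl v, .inl v' => G.Adj v v'
  | .inr w, .inr w' => H.Adj w w'
  | _, _ => True

/-- Graph join of two simple graphs: disjoint union plus all cross edges. -/
def joinGraph {V W : Type} (G : SimpleGraph V) (H : SimpleGraph W) : SimpleGraph (V ⊕ W) :=
  SimpleGraph.fromRel (joinRel G H)

/-- Cographs: the smallest class of graphs (up to isomorphism) containing the
one-vertex graph and closed under disjoint unions and graph joins. -/
inductive IsCograph : {V : Type} → SimpleGraph V → Prop
  | single : IsCograph (⊥ : SimpleGraph PUnit)
  | iso {V W : Type} {G : SimpleGraph V} {H : SimpleGraph W} (e : G ≃g H) :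
      IsCograph G → IsCograph H
  | coprod {V W : Type} {G : SimpleGraph V} {H : SimpleGraph W} :
      IsCograph G → IsCograph H → IsCograph (sumGraph G H)
  | join {V W : Type} {G : SimpleGraph V} {H : SimpleGraph W} :
      IsCograph G → IsCograph H → IsCograph (joinGraph G H)

/-- `f` encodes the graph `G` into `(2²)^d`: it is injective, edges correspond to
up-1-combs and non-edges to wide right-1-combs. -/
def IsEncoding {V : Type} {d : ℕ} (G : SimpleGraph V) (f : V → Fin d → Sq) : Prop :=
  Function.Injective f ∧
    ∀ v₀ v₁ : V, v₀ ≠ v₁ →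
      ((G.Adj v₀ v₁ ↔ UpPair (f v₀) (f v₁)) ∧
       (¬ G.Adj v₀ v₁ ↔ WidePair (f v₀) (f v₁)))

lemma upPair_cons {d : ℕ} (a : Sq) (σ τ : Fin d → Sq) :
    UpPair (Fin.cons a σ) (Fin.cons a τ) ↔ UpPair σ τ := by
  constructor
  · rintro ⟨t, hpre, h1, h2⟩
    rcases Fin.eq_zero_or_eq_succ t with rfl | ⟨t', rfl⟩
    · simp at h2
    · refine ⟨t', fun s hs => ?_, by simpa using h1, by simpa using h2⟩
      have := hpre s.succ (by simpa using hs)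
      simpa using this
  · rintro ⟨t, hpre, h1, h2⟩
    refine ⟨t.succ, fun s hs => ?_, by simpa using h1, by simpa using h2⟩
    rcases Fin.eq_zero_or_eq_succ s with rfl | ⟨s', rfl⟩
    · simp
    · have : s' < t := by simpa using hs
      simpa using hpre s' this

lemma widePair_cons {d : ℕ} (a : Sq) (σ τ : Fin d → Sq) :
    WidePair (Fin.cons a σ) (Fin.cons a τ) ↔ WidePair σ τ := by
  constructor
  · rintro ⟨t, hpre, h1⟩
    rcases Fin.eq_zero_or_eq_succ t with rfl | ⟨t', rfl⟩
    · simp at h1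
    · refine ⟨t', fun s hs => ?_, by simpa using h1⟩
      have := hpre s.succ (by simpa using hs)
      simpa using this
  · rintro ⟨t, hpre, h1⟩
    refine ⟨t.succ, fun s hs => ?_, by simpa using h1⟩
    rcases Fin.eq_zero_or_eq_succ s with rfl | ⟨s', rfl⟩
    · simp
    · have : s' < t := by simpa using hs
      simpa using hpre s' this

lemma not_upPair_cross {d : ℕ} {a b : Sq} (h : a ≠ b) (h1 : a.1 ≠ b.1)
    (σ τ : Fin d → Sq) : ¬ UpPair (Fin.cons a σ) (Fin.cons b τ) := by
  rintro ⟨t, hpre, hfst, _⟩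
  rcases Fin.eq_zero_or_eq_succ t with rfl | ⟨t', rfl⟩
  · exact h1 (by simpa using hfst)
  · exact h (by simpa using hpre 0 (Fin.succ_pos t'))

lemma not_widePair_cross {d : ℕ} {a b : Sq} (h : a ≠ b) (h1 : a.1 = b.1)
    (σ τ : Fin d → Sq) : ¬ WidePair (Fin.cons a σ) (Fin.cons b τ) := by
  rintro ⟨t, hpre, hfst⟩
  rcases Fin.eq_zero_or_eq_succ t with rfl | ⟨t', rfl⟩
  · exact hfst (by simpa using h1)
  · exact h (by simpa using hpre 0 (Fin.succ_pos t'))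

lemma widePair_cross {d : ℕ} {a b : Sq} (h1 : a.1 ≠ b.1)
    (σ τ : Fin d → Sq) : WidePair (Fin.cons a σ) (Fin.cons b τ) :=
  ⟨0, fun s hs => absurd hs (by simp), by simpa using h1⟩

lemma upPair_cross {d : ℕ} {a b : Sq} (h1 : a.1 = b.1) (h2 : a.2 ≠ b.2)
    (σ τ : Fin d → Sq) : UpPair (Fin.cons a σ) (Fin.cons b τ) :=
  ⟨0, fun s hs => absurd hs (by simp), by simpa using h1, by simpa using h2⟩

lemma upPair_comm {d : ℕ} (σ τ : Fin d → Sq) : UpPair σ τ ↔ UpPair τ σ := by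
  constructor <;> rintro ⟨t, hp, h1, h2⟩ <;>
    exact ⟨t, fun s hs => (hp s hs).symm, h1.symm, h2.symm⟩

lemma widePair_comm {d : ℕ} (σ τ : Fin d → Sq) : WidePair σ τ ↔ WidePair τ σ := by
  constructor <;> rintro ⟨t, hp, h1⟩ <;>
    exact ⟨t, fun s hs => (hp s hs).symm, h1.symm⟩

lemma encoding_cons {V₀ V₁ : Type} {d : ℕ} {G₀ : SimpleGraph V₀} {G₁ : SimpleGraph V₁}
    {f₀ : V₀ → Fin d → Sq} {f₁ : V₁ → Fin d → Sq}
    (he₀ : IsEncoding G₀ f₀) (he₁ : IsEncoding G₁ f₁)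
    (a b : Sq) (hab : a ≠ b)
    (R : SimpleGraph (V₀ ⊕ V₁))
    (hll : ∀ v v', v ≠ v' → (R.Adj (.inl v) (.inl v') ↔ G₀.Adj v v'))
    (hrr : ∀ w w', w ≠ w' → (R.Adj (.inr w) (.inr w') ↔ G₁.Adj w w'))
    (hlr : ∀ v w, (R.Adj (.inl v) (.inr w) ↔ UpPair (Fin.cons a (f₀ v)) (Fin.cons b (f₁ w)))
         ∧ (¬ R.Adj (.inl v) (.inr w) ↔ WidePair (Fin.cons a (f₀ v)) (Fin.cons b (f₁ w)))) :
    IsEncoding R (Sum.elim (fun v => Fin.cons a (f₀ v)) (fun w => Fin.cons b (f₁ w))) := by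
  constructor
  · rintro (v | w) (v' | w') h <;> simp only [Sum.elim_inl, Sum.elim_inr] at h
    · have ht := congrArg Fin.tail h
      simp only [Fin.tail_cons] at ht
      exact congrArg Sum.inl (he₀.1 ht)
    · exact absurd (by simpa using congrFun h 0) hab
    · exact absurd (by simpa using congrFun h 0) (Ne.symm hab)
    · have ht := congrArg Fin.tail h
      simp only [Fin.tail_cons] at ht
      exact congrArg Sum.inr (he₁.1 ht)
  · rintro (v | w) (v' | w') hne <;> simp only [Sum.elim_inl, Sum.elim_inr]
    · have hvv : v ≠ v' := fun h => hne (by rw [h])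
      obtain ⟨hup, hwide⟩ := he₀.2 v v' hvv
      rw [hll v v' hvv, upPair_cons, widePair_cons]
      exact ⟨hup, hwide⟩
    · exact hlr v w'
    · obtain ⟨h1, h2⟩ := hlr v' w
      refine ⟨?_, ?_⟩
      · rw [R.adj_comm, upPair_comm]; exact h1
      · rw [R.adj_comm, widePair_comm]; exact h2
    · have hww : w ≠ w' := fun h => hne (by rw [h])
      obtain ⟨hup, hwide⟩ := he₁.2 w w' hww
      rw [hrr w w' hww, upPair_cons, widePair_cons]
      exact ⟨hup, hwide⟩

/-- Given encodings of two cographs into `(2²)^d`, attaching a fresh coordinate with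
values `(0,0)`/`(1,0)` encodes the coproduct, and with values `(0,0)`/`(0,1)` encodes
the join, into `(2²)^{d+1}`. -/
theorem stmt_17 {V₀ V₁ : Type} {d : ℕ} (G₀ : SimpleGraph V₀) (G₁ : SimpleGraph V₁)
    (h₀ : IsCograph G₀) (h₁ : IsCograph G₁)
    (f₀ : V₀ → Fin d → Sq) (f₁ : V₁ → Fin d → Sq)
    (he₀ : IsEncoding G₀ f₀) (he₁ : IsEncoding G₁ f₁) :
    IsEncoding (sumGraph G₀ G₁)
      (Sum.elim (fun v => Fin.cons ((0 : Fin 2), (0 : Fin 2)) (f₀ v))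
        (fun v => Fin.cons ((1 : Fin 2), (0 : Fin 2)) (f₁ v))) ∧
    IsEncoding (joinGraph G₀ G₁)
      (Sum.elim (fun v => Fin.cons ((0 : Fin 2), (0 : Fin 2)) (f₀ v))
        (fun v => Fin.cons ((0 : Fin 2), (1 : Fin 2)) (f₁ v))) := by
  constructor
  · refine encoding_cons he₀ he₁ _ _ (by decide) _ ?_ ?_ ?_
    · intro v v' hv
      rw [sumGraph, SimpleGraph.fromRel_adj]
      simp only [sumRel, ne_eq, Sum.inl.injEq, hv, not_false_iff, true_and]
      exact ⟨fun h => h.elim id fun h' => G₀.adj_symm h', Or.inl⟩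
    · intro w w' hw
      rw [sumGraph, SimpleGraph.fromRel_adj]
      simp only [sumRel, ne_eq, Sum.inr.injEq, hw, not_false_iff, true_and]
      exact ⟨fun h => h.elim id fun h' => G₁.adj_symm h', Or.inl⟩
    · intro v w
      have hA : ¬ (sumGraph G₀ G₁).Adj (.inl v) (.inr w) := by
        rw [sumGraph, SimpleGraph.fromRel_adj]
        simp [sumRel]
      exact ⟨⟨fun h => absurd h hA,
              fun h => absurd h (not_upPair_cross (by decide) (by decide) _ _)⟩,
             ⟨fun _ => widePair_cross (by decide) _ _, fun _ => hA⟩⟩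
  · refine encoding_cons he₀ he₁ _ _ (by decide) _ ?_ ?_ ?_
    · intro v v' hv
      rw [joinGraph, SimpleGraph.fromRel_adj]
      simp only [joinRel, ne_eq, Sum.inl.injEq, hv, not_false_iff, true_and]
      exact ⟨fun h => h.elim id fun h' => G₀.adj_symm h', Or.inl⟩
    · intro w w' hw
      rw [joinGraph, SimpleGraph.fromRel_adj]
      simp only [joinRel, ne_eq, Sum.inr.injEq, hw, not_false_iff, true_and]
      exact ⟨fun h => h.elim id fun h' => G₁.adj_symm h', Or.inl⟩
    · intro v w
      have hA : (joinGraph G₀ G₁).Adj (.inl v) (.inr w) := by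
        rw [joinGraph, SimpleGraph.fromRel_adj]
        simp [joinRel]
      exact ⟨⟨fun _ => upPair_cross (a := ((0:Fin 2),(0:Fin 2))) (b := ((0:Fin 2),(1:Fin 2))) (by decide) (by decide) _ _, fun _ => hA⟩,
             ⟨fun h => absurd hA h,
              fun h => absurd h (not_widePair_cross (a := ((0:Fin 2),(0:Fin 2))) (b := ((0:Fin 2),(1:Fin 2))) (by decide) (by decide) _ _)⟩⟩
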